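/- (Classical realisation underlying the result that contextuality scenarios with only trivial preparation equivalences admit no contextuality.) Let X, Y, K ≥ 1 and let p : Fin X × Fin Y × Fin K → ℝ satisfy p(k|x,y) ≥ 0 for all k, x, y and Σ_{k ∈ Fin K} p(k|x,y) = 1 for all x, y. On ℂ^X define ρ_x = E_{xx} (the matrix unit with 1 at position (x,x)) and M^y_k = Σ_{x ∈ Fin X} p(k|x,y) E_{xx} (the diagonal matrix with entries p(k|x,y)). Then: (i) each ρ_x is a density matrix; (ii) for each y, {M^y_k}_k is a POVM, i.e. 0 ≤ M^y_k ≤ I and Σ_k M^y_k = I; (iii) tr(ρ_x M^y_k) = p(k|x,y) for all x, y, k; and (iv) for any coefficients β, β' : Fin K × Fin Y → ℝ, if Σ_{k,y} β(k,y) p(k|x,y) = Σ_{k,y} β'(k,y) p(k|x,y) holds for every x ∈ Fin X, then Σ_{k,y} β(k,y) M^y_k = Σ_{k,y} β'(k,y) M^y_k as matrices. -/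

import Mathlib

open Matrix ComplexOrder

lemma mydiag_sum {ι : Type*} {X : ℕ} (s : Finset ι) (f : ι → Fin X → ℂ) :
    ∑ i ∈ s, Matrix.diagonal (f i) = Matrix.diagonal (fun x => ∑ i ∈ s, f i x) := by
  ext a b
  by_cases h : a = b
  · subst h; simp [Matrix.sum_apply]
  · simp [Matrix.sum_apply, Matrix.diagonal_apply_ne _ h]

lemma sum_smul_std_diag (X : ℕ) (c : Fin X → ℂ) :
    (∑ x, c x • Matrix.single x x (1 : ℂ)) = Matrix.diagonal c := by
  ext i j
  by_cases h : i = j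
  · subst h
    simp [Matrix.sum_apply, Matrix.single, Matrix.diagonal, Finset.sum_ite_eq', eq_comm]
  · simp only [Matrix.sum_apply, Matrix.smul_apply, Matrix.single, Matrix.of_apply,
      smul_eq_mul, mul_ite, mul_one, mul_zero, Matrix.diagonal_apply_ne _ h]
    refine Finset.sum_eq_zero fun x _ => ?_
    rw [if_neg]
    rintro ⟨h1, h2⟩
    exact h (h1.symm.trans h2)

lemma std_eq_diag (X : ℕ) (x : Fin X) :
    Matrix.single x x (1 : ℂ) = Matrix.diagonal (fun i => if i = x then 1 else 0) := by
  have := sum_smul_std_diag X (fun i => if i = x then (1 : ℂ) else 0)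
  rw [← this]
  rw [Finset.sum_eq_single x (by intro b _ hb; simp [hb]) (by simp)]
  simp

/-- Classical (diagonal) quantum realisation of an arbitrary behaviour: with
`ρ_x = E_{xx}` and `M^y_k = Σ_x p(k|x,y) E_{xx}` on `ℂ^X`, every behaviour is reproduced,
the operators form density matrices and POVMs, and any measurement operational equivalence
satisfied by the behaviour is satisfied by the operators. -/
theorem diagonal_realisation_trivial_preparation_equivalences
    (X Y K : ℕ) (hX : 1 ≤ X) (hY : 1 ≤ Y) (hK : 1 ≤ K)
    (p : Fin X × Fin Y × Fin K → ℝ)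
    (hpos : ∀ x y k, 0 ≤ p (x, y, k))
    (hnorm : ∀ x y, ∑ k, p (x, y, k) = 1) :
    (∀ x : Fin X, (Matrix.single x x (1 : ℂ)).PosSemidef ∧
      (Matrix.single x x (1 : ℂ)).trace = 1) ∧
    (∀ y k, (∑ x, (p (x, y, k) : ℂ) • Matrix.single x x (1 : ℂ)).PosSemidef) ∧
    (∀ y k, ((1 : Matrix (Fin X) (Fin X) ℂ) -
      ∑ x, (p (x, y, k) : ℂ) • Matrix.single x x (1 : ℂ)).PosSemidef) ∧
    (∀ y, ∑ k, ∑ x, (p (x, y, k) : ℂ) • Matrix.single x x (1 : ℂ) = 1) ∧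
    (∀ x y k, (Matrix.single x x (1 : ℂ) *
      ∑ x', (p (x', y, k) : ℂ) • Matrix.single x' x' (1 : ℂ)).trace = (p (x, y, k) : ℂ)) ∧
    (∀ β β' : Fin K × Fin Y → ℝ,
      (∀ x, ∑ k, ∑ y, β (k, y) * p (x, y, k) = ∑ k, ∑ y, β' (k, y) * p (x, y, k)) →
      ∑ k, ∑ y, (β (k, y) : ℂ) • ∑ x, (p (x, y, k) : ℂ) • Matrix.single x x (1 : ℂ)
        = ∑ k, ∑ y, (β' (k, y) : ℂ) • ∑ x, (p (x, y, k) : ℂ) • Matrix.single x x (1 : ℂ)) := by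
  have hple : ∀ x y k, p (x, y, k) ≤ 1 := by
    intro x y k
    calc p (x, y, k) ≤ ∑ k', p (x, y, k') :=
          Finset.single_le_sum (fun k' _ => hpos x y k') (Finset.mem_univ k)
      _ = 1 := hnorm x y
  refine ⟨?_, ?_, ?_, ?_, ?_, ?_⟩
  · intro x
    rw [std_eq_diag]
    constructor
    · refine Matrix.posSemidef_diagonal_iff.mpr fun i => ?_
      by_cases h : i = x <;> simp [h]
    · simp [Matrix.trace_diagonal]
  · intro y k
    rw [sum_smul_std_diag]
    refine Matrix.posSemidef_diagonal_iff.mpr fun i => ?_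
    exact_mod_cast hpos i y k
  · intro y k
    rw [sum_smul_std_diag, ← Matrix.diagonal_one]
    have : (Matrix.diagonal (fun _ : Fin X => (1 : ℂ))) - Matrix.diagonal (fun x => (p (x, y, k) : ℂ))
        = Matrix.diagonal (fun x => (1 : ℂ) - (p (x, y, k) : ℂ)) := by
      rw [← Matrix.diagonal_sub]
    rw [this]
    refine Matrix.posSemidef_diagonal_iff.mpr fun i => ?_
    rw [← Complex.ofReal_one, ← Complex.ofReal_sub]
    exact_mod_cast sub_nonneg.mpr (hple i y k)
  · intro y
    simp_rw [sum_smul_std_diag, mydiag_sum]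
    rw [← Matrix.diagonal_one]
    refine congrArg Matrix.diagonal (funext fun x => ?_)
    rw [← Complex.ofReal_sum, hnorm x y, Complex.ofReal_one]
  · intro x y k
    rw [sum_smul_std_diag, std_eq_diag, Matrix.diagonal_mul_diagonal, Matrix.trace_diagonal]
    simp
  · intro β β' hβ
    have key : ∀ q : Fin K × Fin Y → ℝ,
        (∑ k, ∑ y, (q (k, y) : ℂ) • ∑ x, (p (x, y, k) : ℂ) • Matrix.single x x (1 : ℂ))
        = Matrix.diagonal (fun x => ((∑ k, ∑ y, q (k, y) * p (x, y, k) : ℝ) : ℂ)) := by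
      intro q
      simp_rw [sum_smul_std_diag, ← Matrix.diagonal_smul, mydiag_sum]
      refine congrArg Matrix.diagonal (funext fun x => ?_)
      push_cast
      rfl
    rw [key β, key β']
    exact congrArg Matrix.diagonal (funext fun x => congrArg _ (hβ x))
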